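/- Let L/K be a finite Galois extension with Galois group G, b ∈ L, and σ a non-identity element of G. An element x ∈ L lies in the radical of the alternating K-bilinear form f_{b,σ} (i.e. f_{b,σ}(x,y) = 0 for all y ∈ L) if and only if σ⁻¹(bx) = bσ(x). -/

import Mathlib

variable {K L : Type*} [Field K] [Field L] [Algebra K L]

/-- The alternating bilinear form `f_{b,σ}(x,y) = Tr^L_K (b * (x * σ y - σ x * y))`,
where `Tr^L_K` is the trace form of the extension `L/K`. -/
noncomputable def galoisAltForm (b : L) (σ : L ≃ₐ[K] L) : (L →ₗ[K] L →ₗ[K] K) :=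
  LinearMap.mk₂ K (fun x y => Algebra.trace K L (b * (x * σ y - σ x * y)))
    (fun x x' y => by
      try dsimp only
      rw [show b * ((x + x') * σ y - σ (x + x') * y)
            = b * (x * σ y - σ x * y) + b * (x' * σ y - σ x' * y) by
          rw [map_add σ]; ring, map_add])
    (fun a x y => by
      try dsimp only
      rw [show b * ((a • x) * σ y - σ (a • x) * y)
            = a • (b * (x * σ y - σ x * y)) by
          rw [map_smul σ]
          simp only [smul_sub, smul_mul_assoc, mul_smul_comm, mul_sub], map_smul])
    (fun x y y' => by
      try dsimp only
      rw [show b * (x * σ (y + y') - σ x * (y + y'))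
            = b * (x * σ y - σ x * y) + b * (x * σ y' - σ x * y') by
          rw [map_add σ]; ring, map_add])
    (fun a x y => by
      try dsimp only
      rw [show b * (x * σ (a • y) - σ x * (a • y))
            = a • (b * (x * σ y - σ x * y)) by
          rw [map_smul σ]
          simp only [smul_sub, smul_mul_assoc, mul_smul_comm, mul_sub], map_smul])

/-- `x` lies in the radical of `f_{b,σ}` iff `σ⁻¹(bx) = bσ(x)`. -/
theorem statement1 [FiniteDimensional K L] [IsGalois K L]
    (b : L) (σ : L ≃ₐ[K] L) (hσ : σ ≠ 1) (x : L) :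
    (∀ y : L, galoisAltForm b σ x y = 0) ↔ σ⁻¹ (b * x) = b * σ x := by
  have key : ∀ y : L, galoisAltForm b σ x y
      = Algebra.traceForm K L (σ⁻¹ (b * x) - b * σ x) y := by
    intro y
    have h1 : Algebra.trace K L (b * x * σ y)
        = Algebra.trace K L (σ⁻¹ (b * x) * y) := by
      rw [← Algebra.trace_eq_of_algEquiv σ (σ⁻¹ (b * x) * y), map_mul σ,
        show σ (σ⁻¹ (b * x)) = b * x from σ.apply_symm_apply _]
    simp only [galoisAltForm, LinearMap.mk₂_apply, Algebra.traceForm_apply]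
    rw [show b * (x * σ y - σ x * y) = b * x * σ y - b * σ x * y by ring, map_sub, h1,
      show (σ⁻¹ (b * x) - b * σ x) * y = σ⁻¹ (b * x) * y - b * σ x * y by ring, map_sub]
  constructor
  · intro h
    have := (traceForm_nondegenerate K L).1 (σ⁻¹ (b * x) - b * σ x)
      (fun y => by rw [← key y, h y])
    exact sub_eq_zero.mp this
  · intro h y
    rw [key y, h, sub_self]
    simp
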